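/- Let B be a 2×2 real matrix and let A : [0,T) → GL(2,ℝ) satisfy the ODE system (det A)^{2/3} A⁻¹ A' = B with A(0) = I. Then det A(t) = (1 + (2/3)(tr B)·t)^{3/2}, and A(t) = exp(t·B) if tr B = 0, while A(t) = exp( (3/(2 tr B)) · ln(1 + (2/3)(tr B)·t) · B ) if tr B ≠ 0. -/

import Mathlib

open Matrix

/-- Lemma 2.1 (form of the self-similar actions): if `A : [0,T) → GL(2,ℝ)` solves
`(det A)^{2/3} A⁻¹ A' = B` with `A(0) = I`, then
`det A(t) = (1 + (2/3) tr B · t)^{3/2}` and `A(t) = exp(tB)` when `tr B = 0`, while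
`A(t) = exp((3/(2 tr B)) ln(1 + (2/3) tr B · t) · B)` when `tr B ≠ 0`. -/
theorem self_similar_action_form (B : Matrix (Fin 2) (Fin 2) ℝ) (T : ℝ) (hT : 0 < T)
    (A A' : ℝ → Matrix (Fin 2) (Fin 2) ℝ)
    (hA0 : A 0 = 1)
    (hunit : ∀ t ∈ Set.Ico (0 : ℝ) T, IsUnit (A t).det)
    (hderiv : ∀ t ∈ Set.Ico (0 : ℝ) T, ∀ i j : Fin 2,
      HasDerivAt (fun s => A s i j) (A' t i j) t)
    (hode : ∀ t ∈ Set.Ico (0 : ℝ) T,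
      ((A t).det ^ ((2 : ℝ) / 3)) • ((A t)⁻¹ * A' t) = B) :
    ∀ t ∈ Set.Ico (0 : ℝ) T,
      (A t).det = (1 + (2 / 3) * B.trace * t) ^ ((3 : ℝ) / 2) ∧
      (B.trace = 0 → A t = NormedSpace.exp (t • B)) ∧
      (B.trace ≠ 0 → A t =
        NormedSpace.exp
          (((3 / (2 * B.trace)) * Real.log (1 + (2 / 3) * B.trace * t)) • B)) := by
  letI : NormedRing (Matrix (Fin 2) (Fin 2) ℝ) := Matrix.linftyOpNormedRing
  letI : NormedAlgebra ℝ (Matrix (Fin 2) (Fin 2) ℝ) := Matrix.linftyOpNormedAlgebra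
  set tr := B.trace with htr
  -- continuity of det ∘ A on [0, T)
  have hdet_contAt : ∀ t ∈ Set.Ico (0 : ℝ) T, ContinuousAt (fun s => (A s).det) t := by
    intro t ht
    have : ContinuousAt (fun s => A s 0 0 * A s 1 1 - A s 0 1 * A s 1 0) t :=
      (((hderiv t ht 0 0).continuousAt.mul (hderiv t ht 1 1).continuousAt).sub
        ((hderiv t ht 0 1).continuousAt.mul (hderiv t ht 1 0).continuousAt))
    simpa only [Matrix.det_fin_two] using this
  -- positivity of det
  have hsub : ∀ t ∈ Set.Ico (0 : ℝ) T, Set.Icc (0 : ℝ) t ⊆ Set.Ico (0 : ℝ) T := by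
    intro t ht x hx
    exact ⟨hx.1, lt_of_le_of_lt hx.2 ht.2⟩
  have hf_pos : ∀ t ∈ Set.Ico (0 : ℝ) T, 0 < (A t).det := by
    intro t ht
    by_contra hnp
    push_neg at hnp
    have hco : ContinuousOn (fun s => (A s).det) (Set.Icc 0 t) := fun x hx =>
      (hdet_contAt x (hsub t ht hx)).continuousWithinAt
    have h0 : (0 : ℝ) ∈ Set.Icc ((A t).det) ((A 0).det) := by
      rw [hA0, Matrix.det_one]
      exact ⟨hnp, zero_le_one⟩
    obtain ⟨s, hs, hfs⟩ := intermediate_value_Icc' ht.1 hco h0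
    exact (isUnit_iff_ne_zero.mp (hunit s (hsub t ht hs))) hfs
  -- the ODE for A'
  have hA' : ∀ t ∈ Set.Ico (0 : ℝ) T,
      A' t = ((A t).det ^ ((2 : ℝ) / 3))⁻¹ • (A t * B) := by
    intro t ht
    have hu : (A t).det ^ ((2 : ℝ) / 3) ≠ 0 :=
      (Real.rpow_pos_of_pos (hf_pos t ht) _).ne'
    have h1 : (A t)⁻¹ * A' t = ((A t).det ^ ((2 : ℝ) / 3))⁻¹ • B := by
      rw [← hode t ht, inv_smul_smul₀ hu]
    calc A' t = A t * ((A t)⁻¹ * A' t) := by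
          rw [← Matrix.mul_assoc, Matrix.mul_nonsing_inv _ (hunit t ht), Matrix.one_mul]
      _ = ((A t).det ^ ((2 : ℝ) / 3))⁻¹ • (A t * B) := by
          rw [h1, Matrix.mul_smul]
  -- derivative of det
  have hdet_deriv : ∀ t ∈ Set.Ico (0 : ℝ) T,
      HasDerivAt (fun s => (A s).det)
        (((A t).det ^ ((2 : ℝ) / 3))⁻¹ * ((A t).det * tr)) t := by
    intro t ht
    have H : HasDerivAt (fun s => A s 0 0 * A s 1 1 - A s 0 1 * A s 1 0)
        (A' t 0 0 * A t 1 1 + A t 0 0 * A' t 1 1 -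
          (A' t 0 1 * A t 1 0 + A t 0 1 * A' t 1 0)) t :=
      ((hderiv t ht 0 0).mul (hderiv t ht 1 1)).sub
        ((hderiv t ht 0 1).mul (hderiv t ht 1 0))
    have hval : A' t 0 0 * A t 1 1 + A t 0 0 * A' t 1 1 -
        (A' t 0 1 * A t 1 0 + A t 0 1 * A' t 1 0) =
        ((A t).det ^ ((2 : ℝ) / 3))⁻¹ * ((A t).det * tr) := by
      rw [hA' t ht]
      simp only [Matrix.smul_apply, Matrix.mul_apply, Fin.sum_univ_two, smul_eq_mul,
        Matrix.det_fin_two, htr, Matrix.trace_fin_two]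
      ring
    rw [← hval]
    simpa only [Matrix.det_fin_two] using H
  -- derivative of det ^ (2/3)
  have hG_deriv : ∀ t ∈ Set.Ico (0 : ℝ) T,
      HasDerivAt (fun s => (A s).det ^ ((2 : ℝ) / 3)) (2 / 3 * tr) t := by
    intro t ht
    have hd := hf_pos t ht
    have H := (hdet_deriv t ht).rpow_const (p := (2 : ℝ) / 3) (Or.inl hd.ne')
    have hval : ((A t).det ^ ((2 : ℝ) / 3))⁻¹ * ((A t).det * tr) * ((2 : ℝ) / 3) *
        (A t).det ^ ((2 : ℝ) / 3 - 1) = 2 / 3 * tr := by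
      have h1 : ((A t).det ^ ((2 : ℝ) / 3))⁻¹ = (A t).det ^ (-((2 : ℝ) / 3)) := by
        rw [Real.rpow_neg hd.le]
      have h2 : (A t).det ^ (-((2 : ℝ) / 3)) * (A t).det ^ (1 : ℝ) *
          (A t).det ^ ((2 : ℝ) / 3 - 1) = 1 := by
        rw [← Real.rpow_add hd, ← Real.rpow_add hd]
        norm_num
      rw [h1]
      rw [Real.rpow_one] at h2
      linear_combination (2 / 3 * tr) * h2
    rw [← hval]
    exact H
  -- det ^ (2/3) = 1 + 2/3 tr t
  have hGform : ∀ t ∈ Set.Ico (0 : ℝ) T,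
      (A t).det ^ ((2 : ℝ) / 3) = 1 + 2 / 3 * tr * t := by
    intro t ht
    have hkey : ∀ x ∈ Set.Icc (0 : ℝ) t,
        (fun s => (A s).det ^ ((2 : ℝ) / 3) - 2 / 3 * tr * s) x =
        (fun s => (A s).det ^ ((2 : ℝ) / 3) - 2 / 3 * tr * s) 0 := by
      apply constant_of_has_deriv_right_zero
      · intro x hx
        have hx' := hsub t ht hx
        exact ((hG_deriv x hx').continuousAt.sub
          ((continuous_const.mul continuous_id).continuousAt)).continuousWithinAt
      · intro x hx
        have hx' : x ∈ Set.Ico (0 : ℝ) T := ⟨hx.1, hx.2.trans ht.2⟩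
        have : HasDerivAt (fun s => (A s).det ^ ((2 : ℝ) / 3) - 2 / 3 * tr * s)
            (2 / 3 * tr - 2 / 3 * tr) x :=
          (hG_deriv x hx').sub (by simpa using (hasDerivAt_id x).const_mul (2 / 3 * tr))
        simpa using this.hasDerivWithinAt
    have := hkey t ⟨ht.1, le_refl t⟩
    simp only [hA0, Matrix.det_one, Real.one_rpow, mul_zero, sub_zero] at this
    linarith
  have hgpos : ∀ t ∈ Set.Ico (0 : ℝ) T, 0 < 1 + 2 / 3 * tr * t := by
    intro t ht
    rw [← hGform t ht]
    exact Real.rpow_pos_of_pos (hf_pos t ht) _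
  -- the determinant formula
  have hdet_eq : ∀ t ∈ Set.Ico (0 : ℝ) T,
      (A t).det = (1 + 2 / 3 * tr * t) ^ ((3 : ℝ) / 2) := by
    intro t ht
    rw [← hGform t ht, ← Real.rpow_mul (hf_pos t ht).le]
    norm_num
  -- the key uniqueness argument
  have key : ∀ c : ℝ → ℝ, c 0 = 0 →
      (∀ x ∈ Set.Ico (0 : ℝ) T, HasDerivAt c ((1 + 2 / 3 * tr * x)⁻¹) x) →
      ∀ t ∈ Set.Ico (0 : ℝ) T, A t = NormedSpace.exp (c t • B) := by
    intro c hc0 hc t ht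
    -- matrix-level derivative of A
    have hAd : ∀ x ∈ Set.Ico (0 : ℝ) T, HasDerivAt A (A' x) x := by
      intro x hx
      have hrepr : ∀ M : Matrix (Fin 2) (Fin 2) ℝ,
          M = ∑ i : Fin 2, ∑ j : Fin 2, M i j • Matrix.single i j (1 : ℝ) := by
        intro M
        simp_rw [Matrix.smul_single, smul_eq_mul, mul_one]
        exact Matrix.matrix_eq_sum_single M
      have H : HasDerivAt
          (fun s => ∑ i : Fin 2, ∑ j : Fin 2, A s i j • Matrix.single i j (1 : ℝ))
          (∑ i : Fin 2, ∑ j : Fin 2, A' x i j • Matrix.single i j (1 : ℝ)) x :=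
        HasDerivAt.fun_sum fun i _ => HasDerivAt.fun_sum fun j _ => (hderiv x hx i j).smul_const _
      rw [← hrepr (A' x)] at H
      convert H using 1
      funext s
      exact hrepr (A s)
    -- derivative of D = A * exp(-c • B) vanishes
    have hD : ∀ x ∈ Set.Ico (0 : ℝ) T,
        HasDerivAt (fun s => A s * NormedSpace.exp ((-c s) • B)) 0 x := by
      intro x hx
      have hN : HasDerivAt (fun s => NormedSpace.exp ((-c s) • B))
          ((-(1 + 2 / 3 * tr * x)⁻¹) • (NormedSpace.exp ((-c x) • B) * B)) x :=
        by have := HasDerivAt.scomp x (hasDerivAt_exp_smul_const B (-c x)) (hc x hx).neg; exact this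
      have H := (hAd x hx).mul hN
      have hcomm : B * NormedSpace.exp ((-c x) • B) =
          NormedSpace.exp ((-c x) • B) * B :=
        (((Commute.refl B).smul_right (-c x)).exp_right).eq
      have hzero : A' x * NormedSpace.exp ((-c x) • B) +
          A x * ((-(1 + 2 / 3 * tr * x)⁻¹) • (NormedSpace.exp ((-c x) • B) * B)) = 0 := by
        rw [hA' x hx, hGform x hx]
        rw [smul_mul_assoc, mul_smul_comm, ← hcomm, ← Matrix.mul_assoc,
          ← add_smul, add_neg_cancel, zero_smul]
      rw [← hzero]
      exact H
    -- constancy on [0, t]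
    have hconst := constant_of_has_deriv_right_zero
      (f := fun s => A s * NormedSpace.exp ((-c s) • B)) (a := 0) (b := t)
      (fun x hx => ((hD x (hsub t ht hx)).continuousAt).continuousWithinAt)
      (fun x hx => (hD x ⟨hx.1, hx.2.trans ht.2⟩).hasDerivWithinAt)
      t ⟨ht.1, le_refl t⟩
    simp only [hA0, hc0, neg_zero, zero_smul, NormedSpace.exp_zero, Matrix.one_mul] at hconst
    -- conclude
    have hinv : NormedSpace.exp ((-c t) • B) * NormedSpace.exp (c t • B) = 1 := by
      have hco : Commute ((-c t) • B) (c t • B) :=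
        ((Commute.refl B).smul_left (-c t)).smul_right (c t)
      rw [← Matrix.exp_add_of_commute _ _ hco, neg_smul, neg_add_cancel,
        NormedSpace.exp_zero]
    calc A t = A t * (NormedSpace.exp ((-c t) • B) * NormedSpace.exp (c t • B)) := by
          rw [hinv, Matrix.mul_one]
      _ = (A t * NormedSpace.exp ((-c t) • B)) * NormedSpace.exp (c t • B) := by
          rw [Matrix.mul_assoc]
      _ = NormedSpace.exp (c t • B) := by rw [hconst, Matrix.one_mul]
  -- final assembly
  intro t ht
  refine ⟨hdet_eq t ht, ?_, ?_⟩
  · intro h0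
    have := key (fun s => s) rfl (fun x hx => by
      simp only [h0, mul_zero, zero_mul, add_zero, inv_one]; exact hasDerivAt_id' x) t ht
    simpa using this
  · intro h0
    refine key (fun s => 3 / (2 * tr) * Real.log (1 + 2 / 3 * tr * s)) ?_ ?_ t ht
    · simp
    · intro x hx
      have hu : HasDerivAt (fun s => 1 + 2 / 3 * tr * s) (2 / 3 * tr) x := by
        simpa using ((hasDerivAt_id x).const_mul (2 / 3 * tr)).const_add 1
      have hlog : HasDerivAt (fun s => Real.log (1 + 2 / 3 * tr * s))
          ((1 + 2 / 3 * tr * x)⁻¹ * (2 / 3 * tr)) x :=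
        by have := (Real.hasDerivAt_log (hgpos x hx).ne').comp x hu; exact this
      have H := hlog.const_mul (3 / (2 * tr))
      have h2 : 3 / (2 * tr) * ((1 + 2 / 3 * tr * x)⁻¹ * (2 / 3 * tr)) =
          (1 + 2 / 3 * tr * x)⁻¹ := by
        rw [mul_comm ((1 + 2 / 3 * tr * x)⁻¹), ← mul_assoc,
          show (3 : ℝ) / (2 * tr) * (2 / 3 * tr) = 1 from by field_simp, one_mul]
      rw [h2] at H
      exact H
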